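/- Let F ∈ ℝ^{N×M} have δ_{2s}(F) < 1/√2, and suppose ỹ = F e for an s-sparse e. Let ê minimize ‖e'‖₁ subject to F e' = ỹ. Then ê = e (exact recovery). -/

import Mathlib

open Matrix
open Finset


private noncomputable def sg (x : ℝ) : ℝ := if 0 ≤ x then 1 else -1

private lemma sg_mul_abs (x : ℝ) : sg x * |x| = x := by
  unfold sg
  split
  · rw [abs_of_nonneg ‹_›, one_mul]
  · rw [abs_of_neg (lt_of_not_ge ‹_›)]; ring

private lemma abs_sg_mul (x c : ℝ) (hc : 0 ≤ c) : |sg x * c| = c := by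
  unfold sg
  split <;> simp [abs_of_nonneg hc, abs_of_nonpos, hc, abs_mul]

/-- base: at most one "fractional" coordinate implies s-sparse -/
lemma sparse_base {M : ℕ} (v : Fin M → ℝ) (α : ℝ) (s : ℕ)
    (hfrac : (Finset.univ.filter fun i => v i ≠ 0 ∧ |v i| ≠ α).card ≤ 1)
    (hbd : ∀ i, |v i| ≤ α) (h1 : (∑ i, |v i|) ≤ s * α) :
    (Finset.univ.filter fun i => v i ≠ 0).card ≤ s := by
  classical
  set Z := Finset.univ.filter fun i => v i ≠ 0 with hZ
  set Fr := Finset.univ.filter fun i => v i ≠ 0 ∧ |v i| ≠ α with hFr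
  have hFrZ : Fr ⊆ Z := by
    intro i hi
    simp only [hFr, Finset.mem_filter] at hi
    simp only [hZ, Finset.mem_filter]
    exact ⟨hi.1, hi.2.1⟩
  rcases le_or_gt α 0 with hα | hα
  · have : Z = ∅ := by
      apply Finset.eq_empty_of_forall_notMem
      intro i hi
      simp only [hZ, Finset.mem_filter] at hi
      exact hi.2 (abs_eq_zero.1 (le_antisymm (le_trans (hbd i) hα) (abs_nonneg _)))
    rw [this]; simp
  · -- α > 0
    have hZdiff : ∀ i ∈ Z \ Fr, |v i| = α := by
      intro i hi
      rw [Finset.mem_sdiff] at hi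
      obtain ⟨hiZ, hiFr⟩ := hi
      simp only [hZ, Finset.mem_filter] at hiZ
      simp only [hFr, Finset.mem_filter] at hiFr
      by_contra hne
      exact hiFr ⟨Finset.mem_univ i, hiZ.2, hne⟩
    have hsum1 : ∑ i ∈ Z \ Fr, |v i| = ((Z \ Fr).card : ℝ) * α := by
      rw [Finset.sum_congr rfl hZdiff, Finset.sum_const, nsmul_eq_mul]
    have hsumZ : ∑ i ∈ Z, |v i| = ∑ i, |v i| := by
      apply Finset.sum_subset (Finset.subset_univ Z)
      intro i _ hiZ
      simp only [hZ, Finset.mem_filter, Finset.mem_univ, true_and, not_not] at hiZ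
      simp [hiZ]
    have hsplit : ∑ i ∈ Z, |v i| = ∑ i ∈ Z \ Fr, |v i| + ∑ i ∈ Fr, |v i| := by
      rw [← Finset.sum_sdiff hFrZ]
    rcases Finset.eq_empty_or_nonempty Fr with he | hne
    · have hcZ : Z \ Fr = Z := by rw [he]; simp
      have : ((Z.card : ℝ)) * α ≤ s * α := by
        rw [← hcZ]; rw [← hsum1, hcZ]; rw [hsumZ]; exact h1
      have := le_of_mul_le_mul_right (by linarith : (Z.card : ℝ) * α ≤ (s:ℝ) * α) hα
      exact_mod_cast this
    · obtain ⟨j, hj⟩ := hne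
      have hFr1 : Fr.card = 1 := le_antisymm hfrac (Finset.card_pos.2 ⟨j, hj⟩)
      have hjv : v j ≠ 0 := by
        simp only [hFr, Finset.mem_filter] at hj; exact hj.2.1
      have hpos : 0 < ∑ i ∈ Fr, |v i| := by
        apply Finset.sum_pos'
        · intro i _; exact abs_nonneg _
        · exact ⟨j, hj, abs_pos.2 hjv⟩
      have hkey : ((Z \ Fr).card : ℝ) * α < s * α := by
        rw [← hsum1]
        have : ∑ i ∈ Z \ Fr, |v i| + ∑ i ∈ Fr, |v i| ≤ s * α := by
          rw [← hsplit, hsumZ]; exact h1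
        linarith
      have hlt : (Z \ Fr).card < s := by
        exact_mod_cast lt_of_mul_lt_mul_right hkey (le_of_lt hα)
      have hcard : Z.card = (Z \ Fr).card + Fr.card := by
        rw [Finset.card_sdiff_of_subset hFrZ]
        have := Finset.card_le_card hFrZ
        omega
      omega

private lemma sum_update2 {M : ℕ} (f : Fin M → ℝ) (j k : Fin M) (hjk : j ≠ k) (aj ak : ℝ) :
    ∑ i, Function.update (Function.update f j aj) k ak i = ∑ i, f i - f j - f k + aj + ak := by
  rw [Finset.sum_update_of_mem (Finset.mem_univ k),
    Finset.sum_update_of_mem (by simp [hjk] : j ∈ Finset.univ \ {k})]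
  have h1 : ∑ i, f i = ∑ x ∈ Finset.univ \ {k}, f x + f k := by
    rw [Finset.sum_eq_sum_sdiff_singleton_add (Finset.mem_univ k)]
  have h2 : ∑ x ∈ Finset.univ \ {k}, f x
      = ∑ x ∈ (Finset.univ \ {k}) \ {j}, f x + f j := by
    rw [Finset.sum_eq_sum_sdiff_singleton_add (by simp [hjk] : j ∈ Finset.univ \ {k})]
  linarith

lemma sparse_decomp {M : ℕ} (S : Finset (Fin M)) (α : ℝ) (s : ℕ) :
    ∀ n (v : Fin M → ℝ),
      (Finset.univ.filter fun i => v i ≠ 0 ∧ |v i| ≠ α).card ≤ n →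
      (∀ i, |v i| ≤ α) → (∑ i, |v i|) ≤ s * α → (∀ i ∉ S, v i = 0) →
      v ∈ convexHull ℝ {u : Fin M → ℝ |
        (Finset.univ.filter fun i => u i ≠ 0).card ≤ s ∧ (∀ i, |u i| ≤ α) ∧ ∀ i ∉ S, u i = 0} := by
  intro n
  induction n with
  | zero =>
    intro v hfrac hbd h1 hS
    exact subset_convexHull ℝ _ ⟨sparse_base v α s (le_trans hfrac (by norm_num)) hbd h1, hbd, hS⟩
  | succ n ih =>
    intro v hfrac hbd h1 hS
    rcases le_or_gt ((Finset.univ.filter fun i => v i ≠ 0 ∧ |v i| ≠ α).card) 1 with hc1 | hc1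
    · exact subset_convexHull ℝ _ ⟨sparse_base v α s hc1 hbd h1, hbd, hS⟩
    obtain ⟨j, hj, k, hk, hjk⟩ := Finset.one_lt_card.1 hc1
    set Fr := Finset.univ.filter fun i => v i ≠ 0 ∧ |v i| ≠ α with hFrdef
    have hjp := (Finset.mem_filter.1 hj).2
    have hkp := (Finset.mem_filter.1 hk).2
    set a := |v j| with ha
    set b := |v k| with hb
    have ha0 : 0 < a := abs_pos.2 hjp.1
    have haα : a < α := lt_of_le_of_ne (hbd j) hjp.2
    have hb0 : 0 < b := abs_pos.2 hkp.1
    have hbα : b < α := lt_of_le_of_ne (hbd k) hkp.2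
    set t₁ := min (α - a) b with ht₁
    set t₂ := min a (α - b) with ht₂
    have ht₁0 : 0 < t₁ := lt_min (by linarith) hb0
    have ht₂0 : 0 < t₂ := lt_min ha0 (by linarith)
    have ht₁a : t₁ ≤ α - a := min_le_left _ _
    have ht₁b : t₁ ≤ b := min_le_right _ _
    have ht₂a : t₂ ≤ a := min_le_left _ _
    have ht₂b : t₂ ≤ α - b := min_le_right _ _
    set vp : Fin M → ℝ :=
      Function.update (Function.update v j (sg (v j) * (a + t₁))) k (sg (v k) * (b - t₁)) with hvp
    set vm : Fin M → ℝ :=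
      Function.update (Function.update v j (sg (v j) * (a - t₂))) k (sg (v k) * (b + t₂)) with hvm
    have hvpj : vp j = sg (v j) * (a + t₁) := by
      rw [hvp, Function.update_of_ne hjk, Function.update_self]
    have hvpk : vp k = sg (v k) * (b - t₁) := by rw [hvp, Function.update_self]
    have hvpo : ∀ i, i ≠ j → i ≠ k → vp i = v i := fun i hij hik => by
      rw [hvp, Function.update_of_ne hik, Function.update_of_ne hij]
    have hvmj : vm j = sg (v j) * (a - t₂) := by
      rw [hvm, Function.update_of_ne hjk, Function.update_self]
    have hvmk : vm k = sg (v k) * (b + t₂) := by rw [hvm, Function.update_self]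
    have hvmo : ∀ i, i ≠ j → i ≠ k → vm i = v i := fun i hij hik => by
      rw [hvm, Function.update_of_ne hik, Function.update_of_ne hij]
    -- abs values
    have habspj : |vp j| = a + t₁ := by rw [hvpj]; exact abs_sg_mul _ _ (by linarith)
    have habspk : |vp k| = b - t₁ := by rw [hvpk]; exact abs_sg_mul _ _ (by linarith)
    have habsmj : |vm j| = a - t₂ := by rw [hvmj]; exact abs_sg_mul _ _ (by linarith)
    have habsmk : |vm k| = b + t₂ := by rw [hvmk]; exact abs_sg_mul _ _ (by linarith)
    -- generic cardinality helper
    have hcard_aux : ∀ u : Fin M → ℝ, ∀ w : Fin M, w ∈ Fr →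
        ¬(u w ≠ 0 ∧ |u w| ≠ α) →
        (∀ i, i ≠ w → (u i ≠ 0 ∧ |u i| ≠ α) → i ∈ Fr) →
        (Finset.univ.filter fun i => u i ≠ 0 ∧ |u i| ≠ α).card ≤ n := by
      intro u w hw hwfail hsub
      have hsubset : (Finset.univ.filter fun i => u i ≠ 0 ∧ |u i| ≠ α) ⊆ Fr.erase w := by
        intro i hi
        have hip := (Finset.mem_filter.1 hi).2
        have hiw : i ≠ w := fun hh => hwfail (hh ▸ hip)
        exact Finset.mem_erase.2 ⟨hiw, hsub i hiw hip⟩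
      have := Finset.card_le_card hsubset
      rw [Finset.card_erase_of_mem hw] at this
      omega
    -- bounds for vp
    have hbdp : ∀ i, |vp i| ≤ α := by
      intro i
      by_cases hij : i = j
      · subst hij; rw [habspj]; linarith
      by_cases hik : i = k
      · subst hik; rw [habspk]; linarith [hbd i]
      · rw [hvpo i hij hik]; exact hbd i
    have hbdm : ∀ i, |vm i| ≤ α := by
      intro i
      by_cases hij : i = j
      · subst hij; rw [habsmj]; linarith [hbd i]
      by_cases hik : i = k
      · subst hik; rw [habsmk]; linarith
      · rw [hvmo i hij hik]; exact hbd i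
    -- sums preserved
    have habs_fun_p : (fun i => |vp i|)
        = Function.update (Function.update (fun i => |v i|) j (a + t₁)) k (b - t₁) := by
      funext i
      by_cases hik : i = k
      · subst hik; rw [Function.update_self]; exact habspk
      rw [Function.update_of_ne hik]
      by_cases hij : i = j
      · subst hij; rw [Function.update_self]; exact habspj
      · rw [Function.update_of_ne hij, hvpo i hij hik]
    have habs_fun_m : (fun i => |vm i|)
        = Function.update (Function.update (fun i => |v i|) j (a - t₂)) k (b + t₂) := by
      funext i
      by_cases hik : i = k
      · subst hik; rw [Function.update_self]; exact habsmk
      rw [Function.update_of_ne hik]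
      by_cases hij : i = j
      · subst hij; rw [Function.update_self]; exact habsmj
      · rw [Function.update_of_ne hij, hvmo i hij hik]
    have hsump : (∑ i, |vp i|) = ∑ i, |v i| := by
      calc ∑ i, |vp i|
          = ∑ i, Function.update (Function.update (fun i => |v i|) j (a + t₁)) k (b - t₁) i := by
            rw [habs_fun_p]
        _ = ∑ i, |v i| - |v j| - |v k| + (a + t₁) + (b - t₁) := sum_update2 _ j k hjk _ _
        _ = ∑ i, |v i| := by rw [← ha, ← hb]; ring
    have hsumm : (∑ i, |vm i|) = ∑ i, |v i| := by
      calc ∑ i, |vm i|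
          = ∑ i, Function.update (Function.update (fun i => |v i|) j (a - t₂)) k (b + t₂) i := by
            rw [habs_fun_m]
        _ = ∑ i, |v i| - |v j| - |v k| + (a - t₂) + (b + t₂) := sum_update2 _ j k hjk _ _
        _ = ∑ i, |v i| := by rw [← ha, ← hb]; ring
    -- support
    have hSp : ∀ i ∉ S, vp i = 0 := by
      intro i hi
      have hvi := hS i hi
      have hij : i ≠ j := fun hh => hjp.1 (hh ▸ hvi)
      have hik : i ≠ k := fun hh => hkp.1 (hh ▸ hvi)
      rw [hvpo i hij hik]; exact hvi
    have hSm : ∀ i ∉ S, vm i = 0 := by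
      intro i hi
      have hvi := hS i hi
      have hij : i ≠ j := fun hh => hjp.1 (hh ▸ hvi)
      have hik : i ≠ k := fun hh => hkp.1 (hh ▸ hvi)
      rw [hvmo i hij hik]; exact hvi
    -- fractional count decreases
    have hfracp : (Finset.univ.filter fun i => vp i ≠ 0 ∧ |vp i| ≠ α).card ≤ n := by
      rcases le_total (α - a) b with hm | hm
      · -- t₁ = α - a, so |vp j| = α
        have hjt : |vp j| = α := by rw [habspj, ht₁, min_eq_left hm]; ring
        apply hcard_aux vp j hj
        · intro hh; exact hh.2 hjt
        · intro i hiw hip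
          by_cases hik : i = k
          · subst hik; exact hk
          · rw [hvpo i hiw hik] at hip
            exact Finset.mem_filter.2 ⟨Finset.mem_univ i, hip⟩
      · -- t₁ = b, so vp k = 0
        have hkt : vp k = 0 := by
          rw [hvpk, ht₁, min_eq_right hm]; ring
        apply hcard_aux vp k hk
        · intro hh; exact hh.1 hkt
        · intro i hiw hip
          by_cases hij : i = j
          · subst hij; exact hj
          · rw [hvpo i hij hiw] at hip
            exact Finset.mem_filter.2 ⟨Finset.mem_univ i, hip⟩
    have hfracm : (Finset.univ.filter fun i => vm i ≠ 0 ∧ |vm i| ≠ α).card ≤ n := by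
      rcases le_total a (α - b) with hm | hm
      · -- t₂ = a, so vm j = 0
        have hjt : vm j = 0 := by rw [hvmj, ht₂, min_eq_left hm]; ring
        apply hcard_aux vm j hj
        · intro hh; exact hh.1 hjt
        · intro i hiw hip
          by_cases hik : i = k
          · subst hik; exact hk
          · rw [hvmo i hiw hik] at hip
            exact Finset.mem_filter.2 ⟨Finset.mem_univ i, hip⟩
      · -- t₂ = α - b, so |vm k| = α
        have hkt : |vm k| = α := by rw [habsmk, ht₂, min_eq_right hm]; ring
        apply hcard_aux vm k hk
        · intro hh; exact hh.2 hkt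
        · intro i hiw hip
          by_cases hij : i = j
          · subst hij; exact hj
          · rw [hvmo i hij hiw] at hip
            exact Finset.mem_filter.2 ⟨Finset.mem_univ i, hip⟩
    -- convex combination
    have hmemp := ih vp hfracp hbdp (by rw [hsump]; exact h1) hSp
    have hmemm := ih vm hfracm hbdm (by rw [hsumm]; exact h1) hSm
    have hc1 : (0:ℝ) ≤ t₂ / (t₁ + t₂) := by positivity
    have hc2 : (0:ℝ) ≤ t₁ / (t₁ + t₂) := by positivity
    have hsgj : sg (v j) * a = v j := by rw [ha]; exact sg_mul_abs _
    have hsgk : sg (v k) * b = v k := by rw [hb]; exact sg_mul_abs _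
    clear_value vp vm t₁ t₂ a b
    have hts : t₁ + t₂ ≠ 0 := by positivity
    have hcs : t₂ / (t₁ + t₂) + t₁ / (t₁ + t₂) = 1 := by
      rw [← add_div, add_comm t₂ t₁, div_self hts]
    have hkeya : t₂ / (t₁ + t₂) * (a + t₁) + t₁ / (t₁ + t₂) * (a - t₂) = a := by
      field_simp; ring
    have hkeyb : t₂ / (t₁ + t₂) * (b - t₁) + t₁ / (t₁ + t₂) * (b + t₂) = b := by
      field_simp; ring
    have hcomb : v = (t₂ / (t₁ + t₂)) • vp + (t₁ / (t₁ + t₂)) • vm := by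
      funext i
      simp only [Pi.add_apply, Pi.smul_apply, smul_eq_mul]
      symm
      by_cases hij : i = j
      · subst hij
        rw [hvpj, hvmj]
        calc t₂ / (t₁ + t₂) * (sg (v i) * (a + t₁)) + t₁ / (t₁ + t₂) * (sg (v i) * (a - t₂))
            = sg (v i) * (t₂ / (t₁ + t₂) * (a + t₁) + t₁ / (t₁ + t₂) * (a - t₂)) := by ring
          _ = sg (v i) * a := by rw [hkeya]
          _ = v i := hsgj
      by_cases hik : i = k
      · subst hik
        rw [hvpk, hvmk]
        calc t₂ / (t₁ + t₂) * (sg (v i) * (b - t₁)) + t₁ / (t₁ + t₂) * (sg (v i) * (b + t₂))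
            = sg (v i) * (t₂ / (t₁ + t₂) * (b - t₁) + t₁ / (t₁ + t₂) * (b + t₂)) := by ring
          _ = sg (v i) * b := by rw [hkeyb]
          _ = v i := hsgk
      · rw [hvpo i hij hik, hvmo i hij hik]
        linear_combination (v i) * hcs
    rw [hcomb]
    exact (convex_convexHull ℝ _) hmemp hmemm hc1 hc2 hcs


/-- choose k coordinates with largest |h| -/
lemma exists_topk {M : ℕ} (h : Fin M → ℝ) :
    ∀ k, k ≤ M → ∃ T : Finset (Fin M), T.card = k ∧
      ∀ i ∈ T, ∀ j ∉ T, |h j| ≤ |h i| := by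
  intro k
  induction k with
  | zero => intro _; exact ⟨∅, rfl, by simp⟩
  | succ k ih =>
    intro hk
    obtain ⟨T, hTc, hTm⟩ := ih (Nat.le_of_succ_le hk)
    have hne : (Finset.univ \ T).Nonempty := by
      rw [← Finset.card_pos, Finset.card_sdiff_of_subset (Finset.subset_univ T)]
      simp only [Finset.card_univ, Fintype.card_fin]
      omega
    obtain ⟨b, hb, hbmax⟩ := Finset.exists_max_image _ (fun j => |h j|) hne
    have hbT : b ∉ T := (Finset.mem_sdiff.1 hb).2
    refine ⟨insert b T, by rw [Finset.card_insert_of_notMem hbT, hTc], ?_⟩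
    intro i hi j hj
    have hjT : j ∉ T := fun hh => hj (Finset.mem_insert_of_mem hh)
    rcases Finset.mem_insert.1 hi with rfl | hiT
    · exact hbmax j (Finset.mem_sdiff.2 ⟨Finset.mem_univ j, hjT⟩)
    · exact hTm i hiT j hjT

/-- sum of |h| over any smaller set is at most sum over a top set -/
lemma sum_le_top {M : ℕ} (h : Fin M → ℝ) (T₀ T : Finset (Fin M))
    (hcard : T₀.card ≤ T.card)
    (hTm : ∀ i ∈ T, ∀ j ∉ T, |h j| ≤ |h i|) :
    ∑ i ∈ T₀, |h i| ≤ ∑ i ∈ T, |h i| := by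
  have hsplit0 : ∑ i ∈ T₀, |h i| = ∑ i ∈ T₀ ∩ T, |h i| + ∑ i ∈ T₀ \ T, |h i| := by
    rw [Finset.sum_inter_add_sum_sdiff]
  have hsplit1 : ∑ i ∈ T, |h i| = ∑ i ∈ T₀ ∩ T, |h i| + ∑ i ∈ T \ T₀, |h i| := by
    rw [Finset.inter_comm, Finset.sum_inter_add_sum_sdiff]
  rw [hsplit0, hsplit1]
  have hc : (T₀ \ T).card ≤ (T \ T₀).card := by
    have h1 := Finset.card_inter_add_card_sdiff T₀ T
    have h2 := Finset.card_inter_add_card_sdiff T T₀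
    rw [Finset.inter_comm T T₀] at h2
    omega
  rcases Finset.eq_empty_or_nonempty (T₀ \ T) with he | hne
  · rw [he]; simp
    exact Finset.sum_nonneg fun i _ => abs_nonneg _
  · have hne' : (T \ T₀).Nonempty := by
      rw [← Finset.card_pos]
      have := Finset.card_pos.2 hne
      omega
    obtain ⟨b, hb, hbmin⟩ := Finset.exists_min_image _ (fun j => |h j|) hne'
    have hbT : b ∈ T := (Finset.mem_sdiff.1 hb).1
    have hle1 : ∑ i ∈ T₀ \ T, |h i| ≤ (T₀ \ T).card • |h b| := by
      apply Finset.sum_le_card_nsmul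
      intro x hx
      exact hTm b hbT x (Finset.mem_sdiff.1 hx).2
    have hle2 : (T \ T₀).card • |h b| ≤ ∑ i ∈ T \ T₀, |h i| := by
      apply Finset.card_nsmul_le_sum
      intro x hx
      exact hbmin x hx
    have hmono : ((T₀ \ T).card : ℝ) * |h b| ≤ ((T \ T₀).card : ℝ) * |h b| := by
      apply mul_le_mul_of_nonneg_right _ (abs_nonneg _)
      exact_mod_cast hc
    simp only [nsmul_eq_mul] at hle1 hle2
    linarith

set_option maxHeartbeats 1000000 in
/-- Exact recovery by ℓ₁-minimization: if `F` satisfies the RIP of order `2s`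
with constant `δ_{2s} < 1/√2`, `e` is `s`-sparse with `ỹ = F e`, and `ê`
minimizes the ℓ₁ norm subject to `F ê = ỹ`, then `ê = e`. -/
theorem l1_exact_recovery {N M s : ℕ}
    (F : Matrix (Fin N) (Fin M) ℝ) (δ : ℝ) (hδ0 : 0 ≤ δ)
    (hδ : δ < 1 / Real.sqrt 2)
    (hRIP : ∀ x : Fin M → ℝ, (Finset.univ.filter fun i => x i ≠ 0).card ≤ 2 * s →
      (1 - δ) * (∑ i, x i ^ 2) ≤ (∑ i, (F.mulVec x) i ^ 2) ∧
      (∑ i, (F.mulVec x) i ^ 2) ≤ (1 + δ) * (∑ i, x i ^ 2))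
    (e : Fin M → ℝ)
    (hsparse : (Finset.univ.filter fun i => e i ≠ 0).card ≤ s)
    (ytil : Fin N → ℝ) (hy : F.mulVec e = ytil)
    (ehat : Fin M → ℝ) (hfeas : F.mulVec ehat = ytil)
    (hopt : ∀ e' : Fin M → ℝ, F.mulVec e' = ytil →
      (∑ i, |ehat i|) ≤ ∑ i, |e' i|) :
    ehat = e := by
  classical
  -- trivial case s = 0
  rcases Nat.eq_zero_or_pos s with rfl | hs
  · have he0 : ∀ i, e i = 0 := by
      intro i
      by_contra hi
      have h1 : 0 < (Finset.univ.filter fun i => e i ≠ 0).card :=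
        Finset.card_pos.2 ⟨i, Finset.mem_filter.2 ⟨Finset.mem_univ i, hi⟩⟩
      omega
    have hsum : (∑ i, |e i|) = 0 := Finset.sum_eq_zero fun i _ => by rw [he0 i, abs_zero]
    have h2 := hopt e hy
    rw [hsum] at h2
    have h3 := (Finset.sum_eq_zero_iff_of_nonneg fun i _ => abs_nonneg (ehat i)).1
      (le_antisymm h2 (Finset.sum_nonneg fun i _ => abs_nonneg _))
    funext i
    rw [abs_eq_zero.1 (h3 i (Finset.mem_univ i)), he0 i]
  by_contra hne
  set h : Fin M → ℝ := fun i => ehat i - e i with hhdef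
  have hFh : F.mulVec h = 0 := by
    have hsub : h = ehat - e := rfl
    rw [hsub, Matrix.mulVec_sub, hfeas, hy, sub_self]
  -- cone condition for T₀ = supp e
  set T₀ := Finset.univ.filter fun i => e i ≠ 0 with hT₀def
  have hsd : ∀ f : Fin M → ℝ, ∀ T : Finset (Fin M),
      ∑ i ∈ Finset.univ \ T, f i + ∑ i ∈ T, f i = ∑ i, f i :=
    fun f T => Finset.sum_sdiff (Finset.subset_univ T)
  have cone0 : ∑ i ∈ Finset.univ \ T₀, |h i| ≤ ∑ i ∈ T₀, |h i| := by
    have ho := hopt e hy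
    have h1 : ∀ i ∈ Finset.univ \ T₀, |ehat i| = |h i| := by
      intro i hi
      have : e i = 0 := by
        have := (Finset.mem_sdiff.1 hi).2
        simp only [hT₀def, Finset.mem_filter, Finset.mem_univ, true_and, not_not] at this
        exact this
      simp only [hhdef, this, sub_zero]
    have h2 : ∀ i ∈ Finset.univ \ T₀, |e i| = 0 := by
      intro i hi
      have := (Finset.mem_sdiff.1 hi).2
      simp only [hT₀def, Finset.mem_filter, Finset.mem_univ, true_and, not_not] at this
      rw [this, abs_zero]
    have h3 : ∀ i ∈ T₀, |e i| ≤ |ehat i| + |h i| := by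
      intro i _
      have : e i = ehat i - h i := by simp [hhdef]
      rw [this]
      exact abs_sub _ _
    have e1 := hsd (fun i => |ehat i|) T₀
    have e2 := hsd (fun i => |e i|) T₀
    have e3 : ∑ i ∈ Finset.univ \ T₀, |ehat i| = ∑ i ∈ Finset.univ \ T₀, |h i| :=
      Finset.sum_congr rfl h1
    have e4 : ∑ i ∈ Finset.univ \ T₀, |e i| = 0 :=
      Finset.sum_eq_zero fun i hi => h2 i hi
    have e5 : ∑ i ∈ T₀, |e i| ≤ ∑ i ∈ T₀, |ehat i| + ∑ i ∈ T₀, |h i| := by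
      rw [← Finset.sum_add_distrib]
      exact Finset.sum_le_sum h3
    linarith
  -- top-k set
  obtain ⟨T, hTcard, hTmax⟩ := exists_topk h (min s M) (min_le_right s M)
  have hTs : T.card ≤ s := by rw [hTcard]; exact min_le_left s M
  have hT₀T : T₀.card ≤ T.card := by
    have h1 : T₀.card ≤ M := by
      have := Finset.card_le_univ T₀
      simpa using this
    rw [hTcard]
    exact le_min hsparse h1
  have htrans : ∑ i ∈ T₀, |h i| ≤ ∑ i ∈ T, |h i| := sum_le_top h T₀ T hT₀T hTmax
  have cone : ∑ i ∈ Finset.univ \ T, |h i| ≤ ∑ i ∈ T, |h i| := by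
    have e1 := hsd (fun i => |h i|) T₀
    have e2 := hsd (fun i => |h i|) T
    linarith
  set L := ∑ i ∈ T, |h i| with hLdef
  have hL0 : 0 < L := by
    rcases lt_or_ge 0 L with h' | h'
    · exact h'
    have hL0' : L = 0 := le_antisymm h' (Finset.sum_nonneg fun i _ => abs_nonneg _)
    have htot : (∑ i, |h i|) = 0 := by
      have e2 := hsd (fun i => |h i|) T
      have : ∑ i ∈ Finset.univ \ T, |h i| = 0 := le_antisymm (by linarith)
        (Finset.sum_nonneg fun i _ => abs_nonneg _)
      linarith
    have hz := (Finset.sum_eq_zero_iff_of_nonneg fun i _ => abs_nonneg (h i)).1 htot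
    exfalso
    apply hne
    funext i
    have := abs_eq_zero.1 (hz i (Finset.mem_univ i))
    simp only [hhdef] at this
    linarith
  set x : Fin M → ℝ := fun i => if i ∈ T then h i else 0 with hxdef
  set v : Fin M → ℝ := fun i => if i ∈ T then 0 else h i with hvdef
  set A := ∑ i, x i ^ 2 with hAdef
  have hAT : A = ∑ i ∈ T, h i ^ 2 := by
    rw [hAdef]
    rw [Finset.sum_congr rfl (fun i _ => show x i ^ 2 = if i ∈ T then h i ^ 2 else 0 by
      by_cases hi : i ∈ T <;> simp [hxdef, hi])]
    simp [Finset.sum_ite_mem]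
  have hA0 : 0 < A := by
    rcases lt_or_ge 0 A with h' | h'
    · exact h'
    have hA0' : A = 0 := le_antisymm h' (Finset.sum_nonneg fun i _ => sq_nonneg _)
    rw [hAT] at hA0'
    have hz := (Finset.sum_eq_zero_iff_of_nonneg fun i _ => sq_nonneg (h i)).1 hA0'
    have : L = 0 := Finset.sum_eq_zero fun i hi => by
      rw [abs_eq_zero]
      exact pow_eq_zero_iff (n := 2) (by norm_num) |>.1 (hz i hi)
    linarith
  have hsR : (0:ℝ) < (s:ℝ) := by exact_mod_cast hs
  set α := L / s with hαdef
  have hα0 : 0 < α := div_pos hL0 hsR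
  have hsα : (s:ℝ) * α = L := by
    rw [hαdef]; field_simp
  have hvbd : ∀ i, |v i| ≤ α := by
    intro i
    by_cases hi : i ∈ T
    · simp [hvdef, hi, le_of_lt hα0]
    · have hvi : v i = h i := by simp [hvdef, hi]
      rw [hvi]
      rcases le_or_gt s M with hsM | hsM
      · have hTc : T.card = s := by rw [hTcard, min_eq_left hsM]
        have hle : T.card • |h i| ≤ ∑ j ∈ T, |h j| :=
          Finset.card_nsmul_le_sum T (fun j => |h j|) (|h i|)
            (fun j hj => hTmax j hj i hi)
        rw [hTc] at hle
        simp only [nsmul_eq_mul] at hle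
        rw [hαdef, le_div_iff₀ hsR]
        have hLs : L = ∑ j ∈ T, |h j| := hLdef
        linarith
      · exfalso
        apply hi
        have : T = Finset.univ := by
          apply Finset.eq_univ_of_card
          rw [hTcard, min_eq_right (le_of_lt hsM), Fintype.card_fin]
        rw [this]; exact Finset.mem_univ i
  have hv1 : (∑ i, |v i|) ≤ s * α := by
    have : (∑ i, |v i|) = ∑ i ∈ Finset.univ \ T, |h i| := by
      rw [← hsd (fun i => |v i|) T]
      have z1 : ∑ i ∈ T, |v i| = 0 := Finset.sum_eq_zero fun i hi => by simp [hvdef, hi]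
      have z2 : ∑ i ∈ Finset.univ \ T, |v i| = ∑ i ∈ Finset.univ \ T, |h i| :=
        Finset.sum_congr rfl fun i hi => by
          have := (Finset.mem_sdiff.1 hi).2
          simp [hvdef, this]
      rw [z1, z2, add_zero]
    rw [this, hsα]
    exact cone
  have hvS : ∀ i ∉ Finset.univ \ T, v i = 0 := by
    intro i hi
    have : i ∈ T := by
      by_contra hiT
      exact hi (Finset.mem_sdiff.2 ⟨Finset.mem_univ i, hiT⟩)
    simp [hvdef, this]
  -- decompose v
  have hdec := sparse_decomp (Finset.univ \ T) α s
    ((Finset.univ.filter fun i => v i ≠ 0 ∧ |v i| ≠ α).card) v le_rfl hvbd hv1 hvS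
  rw [_root_.convexHull_eq] at hdec
  obtain ⟨ι, t, w, u, hw0, hw1, hu, hcm⟩ := hdec
  rw [Finset.centerMass_eq_of_sum_1 _ u hw1] at hcm
  -- numeric constants
  set r := Real.sqrt 2 with hrdef
  have hr0 : 0 < r := Real.sqrt_pos.2 (by norm_num)
  have hr2 : r ^ 2 = 2 := Real.sq_sqrt (by norm_num)
  have hr1 : 1 < r := by nlinarith
  have hr32 : r < 3/2 := by nlinarith
  set μ : ℝ := r - 1 with hμdef
  set ν : ℝ := 3 - 2*r with hνdef
  have hμ2 : μ ^ 2 = 3 - 2*r := by rw [hμdef]; linear_combination hr2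
  have hν2 : ν ^ 2 = 17 - 12*r := by rw [hνdef]; linear_combination 4*hr2
  set g := F.mulVec x with hgdef
  have hgv : F.mulVec v = fun i => - g i := by
    have hv2 : v = h - x := by
      funext i
      by_cases hi : i ∈ T <;> simp [hxdef, hvdef, hhdef, hi]
    rw [hv2, Matrix.mulVec_sub, hFh, hgdef]
    funext i; simp
  set yp : ι → Fin M → ℝ := fun j i => x i + μ * u j i with hypdef
  set ym : ι → Fin M → ℝ := fun j i => ν * x i - μ * u j i with hymdef
  -- per-index facts
  have hfacts : ∀ j ∈ t,
      (1 - δ) * (A + μ^2 * ∑ i, u j i ^ 2) ≤ (∑ i, (F.mulVec (yp j)) i ^ 2) ∧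
      (∑ i, (F.mulVec (ym j)) i ^ 2) ≤ (1 + δ) * (ν^2 * A + μ^2 * ∑ i, u j i ^ 2) ∧
      (∑ i, u j i ^ 2) ≤ A := by
    intro j hj
    obtain ⟨hucard, hubd, huS⟩ := hu j hj
    have horth : ∀ i, x i * u j i = 0 := by
      intro i
      by_cases hi : i ∈ T
      · have hni : i ∉ Finset.univ \ T := by simp [hi]
        rw [huS i hni, mul_zero]
      · simp [hxdef, hi]
    have hsupx : ∀ i, x i ≠ 0 → i ∈ T := by
      intro i
      by_cases hi : i ∈ T <;> simp [hxdef, hi]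
    -- sparsity of yp j
    have hcardp : (Finset.univ.filter fun i => yp j i ≠ 0).card ≤ 2 * s := by
      have hsub : (Finset.univ.filter fun i => yp j i ≠ 0)
          ⊆ T ∪ (Finset.univ.filter fun i => u j i ≠ 0) := by
        intro i hi
        have hi' := (Finset.mem_filter.1 hi).2
        by_cases hui : u j i = 0
        · refine Finset.mem_union.2 (Or.inl (hsupx i ?_))
          intro hxi
          apply hi'
          simp [hypdef, hxi, hui]
        · exact Finset.mem_union.2 (Or.inr (Finset.mem_filter.2 ⟨Finset.mem_univ i, hui⟩))
      have := (Finset.card_le_card hsub).trans (Finset.card_union_le _ _)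
      omega
    have hcardm : (Finset.univ.filter fun i => ym j i ≠ 0).card ≤ 2 * s := by
      have hsub : (Finset.univ.filter fun i => ym j i ≠ 0)
          ⊆ T ∪ (Finset.univ.filter fun i => u j i ≠ 0) := by
        intro i hi
        have hi' := (Finset.mem_filter.1 hi).2
        by_cases hui : u j i = 0
        · refine Finset.mem_union.2 (Or.inl (hsupx i ?_))
          intro hxi
          apply hi'
          simp [hymdef, hxi, hui]
        · exact Finset.mem_union.2 (Or.inr (Finset.mem_filter.2 ⟨Finset.mem_univ i, hui⟩))
      have := (Finset.card_le_card hsub).trans (Finset.card_union_le _ _)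
      omega
    have hrip_p := hRIP (yp j) hcardp
    have hrip_m := hRIP (ym j) hcardm
    have hnp : (∑ i, yp j i ^ 2) = A + μ^2 * ∑ i, u j i ^ 2 := by
      calc (∑ i, yp j i ^ 2) = ∑ i, (x i ^ 2 + μ^2 * u j i ^ 2) :=
            Finset.sum_congr rfl fun i _ => by
              have := horth i
              simp only [hypdef]
              linear_combination (2*μ) * this
        _ = A + μ^2 * ∑ i, u j i ^ 2 := by
            rw [Finset.sum_add_distrib, ← Finset.mul_sum, hAdef]
    have hnm : (∑ i, ym j i ^ 2) = ν^2 * A + μ^2 * ∑ i, u j i ^ 2 := by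
      calc (∑ i, ym j i ^ 2) = ∑ i, (ν^2 * x i ^ 2 + μ^2 * u j i ^ 2) :=
            Finset.sum_congr rfl fun i _ => by
              have := horth i
              simp only [hymdef]
              linear_combination (-2*μ*ν) * this
        _ = ν^2 * A + μ^2 * ∑ i, u j i ^ 2 := by
            rw [Finset.sum_add_distrib, ← Finset.mul_sum, ← Finset.mul_sum, hAdef]
    -- Uj ≤ A
    have hUjA : (∑ i, u j i ^ 2) ≤ A := by
      have h1 : (∑ i, u j i ^ 2)
          = ∑ i ∈ Finset.univ.filter fun i => u j i ≠ 0, u j i ^ 2 := by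
        symm
        apply Finset.sum_filter_of_ne
        intro i _ hne2
        intro hzero
        apply hne2
        rw [hzero]
        norm_num
      have h2 : ∑ i ∈ (Finset.univ.filter fun i => u j i ≠ 0), u j i ^ 2
          ≤ (Finset.univ.filter fun i => u j i ≠ 0).card • α^2 := by
        apply Finset.sum_le_card_nsmul
        intro i _
        calc u j i ^ 2 = |u j i| ^ 2 := (sq_abs _).symm
          _ ≤ α ^ 2 := pow_le_pow_left₀ (abs_nonneg _) (hubd i) 2
      have h3 : ((Finset.univ.filter fun i => u j i ≠ 0).card : ℝ) * α^2 ≤ (s:ℝ) * α^2 := by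
        apply mul_le_mul_of_nonneg_right _ (sq_nonneg α)
        exact_mod_cast hucard
      have hCS : L^2 ≤ (T.card : ℝ) * ∑ i ∈ T, h i ^ 2 := by
        have hcs := Finset.sum_mul_sq_le_sq_mul_sq T (fun _ => (1:ℝ)) (fun i => |h i|)
        have e1 : (∑ i ∈ T, (1:ℝ) * |h i|) = L := by
          rw [hLdef]; exact Finset.sum_congr rfl fun i _ => one_mul _
        have e2 : (∑ _i ∈ T, (1:ℝ)^2) = (T.card : ℝ) := by
          simp
        have e3 : (∑ i ∈ T, |h i|^2) = ∑ i ∈ T, h i ^2 :=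
          Finset.sum_congr rfl fun i _ => sq_abs _
        rw [e1, e2, e3] at hcs
        exact hcs
      have hTA : (T.card : ℝ) * (∑ i ∈ T, h i ^ 2) ≤ (s:ℝ) * A := by
        rw [hAT]
        apply mul_le_mul_of_nonneg_right _ (Finset.sum_nonneg fun i _ => sq_nonneg _)
        exact_mod_cast hTs
      have hLA : L^2 ≤ (s:ℝ) * A := le_trans hCS hTA
      have hsα2 : (s:ℝ) * α^2 = L^2 / s := by
        rw [hαdef]; field_simp
      have h4 : L^2 / s ≤ A := (div_le_iff₀ hsR).2 (by linarith)
      simp only [nsmul_eq_mul] at h2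
      linarith
    refine ⟨?_, ?_, hUjA⟩
    · calc (1 - δ) * (A + μ^2 * ∑ i, u j i ^ 2) = (1-δ) * ∑ i, yp j i ^2 := by rw [hnp]
        _ ≤ _ := hrip_p.1
    · calc (∑ i, (F.mulVec (ym j)) i ^ 2) ≤ (1+δ) * ∑ i, ym j i ^2 := hrip_m.2
        _ = (1 + δ) * (ν^2 * A + μ^2 * ∑ i, u j i ^ 2) := by rw [hnm]
  -- aggregate
  set U := ∑ j ∈ t, w j * (∑ i, u j i ^ 2) with hUdef
  have hU0 : 0 ≤ U := Finset.sum_nonneg fun j hj =>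
    mul_nonneg (hw0 j hj) (Finset.sum_nonneg fun i _ => sq_nonneg _)
  have hUA : U ≤ A := by
    calc U ≤ ∑ j ∈ t, w j * A := Finset.sum_le_sum fun j hj =>
          mul_le_mul_of_nonneg_left (hfacts j hj).2.2 (hw0 j hj)
      _ = A := by rw [← Finset.sum_mul, hw1, one_mul]
  set SP := ∑ j ∈ t, w j * (∑ i, (F.mulVec (yp j)) i ^ 2) with hSPdef
  set SQ := ∑ j ∈ t, w j * (∑ i, (F.mulVec (ym j)) i ^ 2) with hSQdef
  have hSP : (1-δ)*(A + μ^2*U) ≤ SP := by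
    have e1 : (∑ j ∈ t, w j * ((1 - δ) * (A + μ^2 * ∑ i, u j i ^ 2)))
        = (1-δ)*(A + μ^2*U) := by
      rw [Finset.sum_congr rfl (fun j _ => (by ring :
        w j * ((1 - δ) * (A + μ^2 * ∑ i, u j i ^ 2))
          = (1-δ)*A* w j + ((1-δ)*μ^2) * (w j * ∑ i, u j i ^ 2)))]
      rw [Finset.sum_add_distrib, ← Finset.mul_sum, ← Finset.mul_sum, hw1, ← hUdef]
      ring
    rw [← e1, hSPdef]
    exact Finset.sum_le_sum fun j hj =>
      mul_le_mul_of_nonneg_left (hfacts j hj).1 (hw0 j hj)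
  have hSQ : SQ ≤ (1+δ)*(ν^2*A + μ^2*U) := by
    have e1 : (∑ j ∈ t, w j * ((1 + δ) * (ν^2 * A + μ^2 * ∑ i, u j i ^ 2)))
        = (1+δ)*(ν^2*A + μ^2*U) := by
      rw [Finset.sum_congr rfl (fun j _ => (by ring :
        w j * ((1 + δ) * (ν^2 * A + μ^2 * ∑ i, u j i ^ 2))
          = (1+δ)*ν^2*A* w j + ((1+δ)*μ^2) * (w j * ∑ i, u j i ^ 2)))]
      rw [Finset.sum_add_distrib, ← Finset.mul_sum, ← Finset.mul_sum, hw1, ← hUdef]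
      ring
    rw [← e1, hSQdef]
    exact Finset.sum_le_sum fun j hj =>
      mul_le_mul_of_nonneg_left (hfacts j hj).2.1 (hw0 j hj)
  -- the key identity SP = SQ
  have hkey : ∀ j ∈ t, (∑ i, (F.mulVec (yp j)) i ^ 2) - (∑ i, (F.mulVec (ym j)) i ^ 2)
      = (1 - ν^2) * (∑ i, g i ^ 2)
        + (2*μ*(1+ν)) * (∑ i, g i * (F.mulVec (u j)) i) := by
    intro j hj
    have hplus : F.mulVec (yp j) = fun i2 => g i2 + μ * (F.mulVec (u j)) i2 := by
      have hy2 : yp j = x + μ • u j := by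
        funext i; simp [hypdef, smul_eq_mul]
      rw [hy2, Matrix.mulVec_add, Matrix.mulVec_smul, hgdef]
      funext i2; simp
    have hminus : F.mulVec (ym j) = fun i2 => ν * g i2 - μ * (F.mulVec (u j)) i2 := by
      have hy2 : ym j = ν • x - μ • u j := by
        funext i; simp [hymdef, smul_eq_mul]
      rw [hy2, Matrix.mulVec_sub, Matrix.mulVec_smul, Matrix.mulVec_smul, hgdef]
      funext i2; simp
    rw [hplus, hminus, ← Finset.sum_sub_distrib]
    rw [Finset.sum_congr rfl (fun i2 _ => (by ring :
      (g i2 + μ * (F.mulVec (u j)) i2)^2 - (ν * g i2 - μ * (F.mulVec (u j)) i2)^2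
        = (1 - ν^2) * g i2 ^ 2 + (2*μ*(1+ν)) * (g i2 * (F.mulVec (u j)) i2)))]
    rw [Finset.sum_add_distrib, ← Finset.mul_sum, ← Finset.mul_sum]
  have hmulsum : F.mulVec (∑ j ∈ t, w j • u j) = ∑ j ∈ t, w j • F.mulVec (u j) := by
    rw [← Matrix.mulVecLin_apply, map_sum]
    exact Finset.sum_congr rfl fun j _ => by rw [_root_.map_smul, Matrix.mulVecLin_apply]
  have hBsum : (∑ j ∈ t, w j * (∑ i, g i * (F.mulVec (u j)) i)) = - ∑ i, g i ^ 2 := by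
    have hlin : ∀ i2, (∑ j ∈ t, w j * (F.mulVec (u j)) i2) = - g i2 := by
      intro i2
      have h1 : F.mulVec v = ∑ j ∈ t, w j • F.mulVec (u j) := by rw [← hcm, hmulsum]
      have h2 := congrFun h1 i2
      rw [hgv] at h2
      simp only [Finset.sum_apply, Pi.smul_apply, smul_eq_mul] at h2
      linarith [h2]
    calc (∑ j ∈ t, w j * (∑ i, g i * (F.mulVec (u j)) i))
        = ∑ j ∈ t, ∑ i, g i * (w j * (F.mulVec (u j)) i) := by
          refine Finset.sum_congr rfl fun j _ => ?_
          rw [Finset.mul_sum]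
          exact Finset.sum_congr rfl fun i _ => by ring
      _ = ∑ i, ∑ j ∈ t, g i * (w j * (F.mulVec (u j)) i) := Finset.sum_comm
      _ = ∑ i, g i * (∑ j ∈ t, w j * (F.mulVec (u j)) i) := by
          refine Finset.sum_congr rfl fun i _ => ?_
          rw [Finset.mul_sum]
      _ = ∑ i, g i * (- g i) := Finset.sum_congr rfl fun i _ => by rw [hlin i]
      _ = - ∑ i, g i ^ 2 := by
          rw [← Finset.sum_neg_distrib]
          exact Finset.sum_congr rfl fun i _ => by ring
  have hSPSQ : SP = SQ := by
    have h0 : SP - SQ = ∑ j ∈ t, w j * ((∑ i, (F.mulVec (yp j)) i ^ 2)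
        - (∑ i, (F.mulVec (ym j)) i ^ 2)) := by
      rw [hSPdef, hSQdef, ← Finset.sum_sub_distrib]
      exact Finset.sum_congr rfl fun j _ => by ring
    rw [Finset.sum_congr rfl (fun j hj => by rw [hkey j hj])] at h0
    have h1 : (∑ j ∈ t, w j * ((1 - ν^2) * (∑ i, g i ^ 2)
        + (2*μ*(1+ν)) * (∑ i, g i * (F.mulVec (u j)) i)))
        = (1 - ν^2) * (∑ i, g i ^ 2) + (2*μ*(1+ν)) * (- ∑ i, g i ^ 2) := by
      rw [Finset.sum_congr rfl (fun j _ => (by ring :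
        w j * ((1 - ν^2) * (∑ i, g i ^ 2)
          + (2*μ*(1+ν)) * (∑ i, g i * (F.mulVec (u j)) i))
        = ((1 - ν^2) * (∑ i, g i ^ 2)) * w j
          + (2*μ*(1+ν)) * (w j * (∑ i, g i * (F.mulVec (u j)) i))))]
      rw [Finset.sum_add_distrib, ← Finset.mul_sum, ← Finset.mul_sum, hw1, hBsum]
      ring
    rw [h1] at h0
    have h2 : (1 - ν^2) * (∑ i, g i ^ 2) + (2*μ*(1+ν)) * (- ∑ i, g i ^ 2) = 0 := by
      rw [hμdef, hνdef]; ring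
    linarith [h0, h2]
  -- final contradiction
  clear_value SP SQ U A r μ ν
  have hfinal : (1-δ)*(A + μ^2*U) ≤ (1+δ)*(ν^2*A + μ^2*U) := by
    rw [hSPSQ] at hSP
    linarith
  rw [hμ2, hν2] at hfinal
  have step1 : ((1-δ) - (1+δ)*(17-12*r))*A ≤ (2*δ*(3-2*r))*U := by nlinarith [hfinal]
  have h32 : (0:ℝ) ≤ 2*δ*(3-2*r) := by nlinarith
  have step2 : (2*δ*(3-2*r))*U ≤ (2*δ*(3-2*r))*A := mul_le_mul_of_nonneg_left hUA h32
  have step4 : (1-δ) - (1+δ)*(17-12*r) ≤ 2*δ*(3-2*r) :=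
    le_of_mul_le_mul_right (by linarith) hA0
  have h24 : (0:ℝ) < 24 - 16*r := by linarith
  have step6 : δ*(24-16*r) < (1/r)*(24-16*r) := mul_lt_mul_of_pos_right hδ h24
  have step7 : (1/r)*(24-16*r) = 12*r - 16 := by
    rw [one_div, inv_mul_eq_div, div_eq_iff (ne_of_gt hr0)]
    linear_combination (-12)*hr2
  linarith [step4, step6, step7]
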